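/- Let V be a finite-dimensional vector space over a field k and let the affine group GL(V) ⋉ V act on V by (g,v)·w = g w + v. Then this action satisfies the minimal condition on stabilizers: there is no infinite sequence (w_n) in V such that the pointwise stabilizers in GL(V) ⋉ V of {w_0, …, w_n} form a strictly decreasing sequence of subgroups. -/

import Mathlib

/-- The affine group of a vector space `V` (affine bijections `V ≃ᵃ[k] V`, i.e. `GL(V) ⋉ V`,
acting by `(g, v) • w = g w + v`) acts on `V` by evaluation. -/
instance affineGroupAction (k V : Type*) [Field k] [AddCommGroup V] [Module k V] :
    MulAction (V ≃ᵃ[k] V) V where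
  smul := fun f w => f w
  one_smul := fun w => rfl
  mul_smul := fun f g w => rfl

/-- For a finite-dimensional vector space `V` over a field `k`, the action of the affine
group `GL(V) ⋉ V` on `V` satisfies the minimal condition on stabilizers: there is no
sequence `(w n)` in `V` whose pointwise stabilizers of `{w 0, …, w n}` are strictly
decreasing. -/
theorem affine_minCondStabilizers (k V : Type*) [Field k] [AddCommGroup V] [Module k V]
    [FiniteDimensional k V] :
    ¬ ∃ w : ℕ → V,
        StrictAnti (fun n : ℕ =>
          ⨅ j ∈ Finset.range (n + 1), MulAction.stabilizer (V ≃ᵃ[k] V) (w j)) := by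
  rintro ⟨w, hw⟩
  -- the linear spans of the difference vectors
  set S : ℕ → Submodule k V :=
    fun n => Submodule.span k ((fun j => w j - w 0) '' {j | j ∈ Finset.range (n + 1)}) with hS
  have Smono : Monotone S := by
    intro m n hmn
    apply Submodule.span_mono
    apply Set.image_mono
    intro j hj
    simp only [Finset.coe_range, Set.mem_setOf_eq, Finset.mem_range] at *
    omega
  have key : ∀ n, S n ≠ S (n + 1) := by
    intro n hEq
    -- then w (n+1) - w 0 ∈ S n, so every f fixing w 0 .. w n fixes w (n+1)
    have hmem : w (n + 1) - w 0 ∈ S n := by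
      rw [hEq]
      exact Submodule.subset_span ⟨n + 1, by simp, rfl⟩
    have hle : (⨅ j ∈ Finset.range (n + 1), MulAction.stabilizer (V ≃ᵃ[k] V) (w j)) ≤
        ⨅ j ∈ Finset.range (n + 2), MulAction.stabilizer (V ≃ᵃ[k] V) (w j) := by
      intro f hf
      simp only [Subgroup.mem_iInf] at hf ⊢
      intro j hj
      rcases Finset.mem_range.mp hj with hj'
      by_cases hjn : j < n + 1
      · exact hf j (Finset.mem_range.mpr hjn)
      have hj2 : j = n + 1 := by omega
      subst hj2
      -- show f fixes w (n+1)
      have hfix : ∀ i ∈ Finset.range (n + 1), f (w i) = w i := by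
        intro i hi
        exact hf i hi
      have hlin : ∀ x ∈ S n, f.linear x = x := by
        intro x hx
        induction hx using Submodule.span_induction with
        | mem x hx =>
          obtain ⟨i, hi, rfl⟩ := hx
          have : f.linear (w i - w 0) = f (w i) - f (w 0) := by
            simpa using f.toAffineMap.linearMap_vsub (w i) (w 0)
          rw [this, hfix i hi, hfix 0 (by simp)]
        | zero => simp
        | add x y _ _ hx hy => rw [map_add, hx, hy]
        | smul c x _ hx => rw [map_smul, hx]
      have : f (w (n + 1)) = w (n + 1) := by
        have h1 : f ((w (n + 1) - w 0) +ᵥ w 0) = f.linear (w (n + 1) - w 0) +ᵥ f (w 0) :=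
          f.toAffineMap.map_vadd _ _
        have h2 : (w (n + 1) - w 0) +ᵥ w 0 = w (n + 1) := by
          simp [vadd_eq_add]
        rw [h2] at h1
        rw [h1, hlin _ hmem, hfix 0 (by simp), vadd_eq_add]
        abel
      exact this
    exact absurd hle (not_le_of_gt (hw (Nat.lt_succ_self n)))
  -- contradiction with Noetherian
  obtain ⟨m, hm⟩ := wellFoundedGT_iff_monotone_chain_condition.mp
    ⟨wellFounded_gt (α := Submodule k V)⟩ ⟨S, Smono⟩
  exact key m (by simpa using hm (m + 1) (Nat.le_succ m))
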